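/- Fix z ∈ ℂ with |z| < 1 and let w := √(ε(1−z)) denote the principal complex square root of ε(1−z). Define ā^± := w ± c(1−z) and ē_t^± := exp(± w (T−t)) for t ∈ [0,T], and S_t := w · (ā⁺ ē_t⁺ − ā⁻ ē_t⁻) / (ā⁺ ē_t⁺ + ā⁻ ē_t⁻). Then ā⁺ ē_t⁺ + ā⁻ ē_t⁻ ≠ 0 for all t ∈ [0,T], the function t ↦ S_t is differentiable with (d/dt) S_t = (S_t)² − ε(1−z), and S_T = c(1−z). -/

import Mathlib

/-- `w := (ε(1−z))^{1/2}`, the principal complex square root of `ε(1−z)`. -/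
noncomputable def wGen (ε : ℝ) (z : ℂ) : ℂ := ((ε : ℂ) * (1 - z)) ^ ((1 : ℂ) / 2)

/-- `ā⁺ := w + c(1−z)`. -/
noncomputable def aBarPlus (ε c : ℝ) (z : ℂ) : ℂ := wGen ε z + (c : ℂ) * (1 - z)

/-- `ā⁻ := w − c(1−z)`. -/
noncomputable def aBarMinus (ε c : ℝ) (z : ℂ) : ℂ := wGen ε z - (c : ℂ) * (1 - z)

/-- `ē_t⁺ := exp(w(T−t))`. -/
noncomputable def eBarPlus (T ε : ℝ) (z : ℂ) (t : ℝ) : ℂ :=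
  Complex.exp (wGen ε z * ((T : ℂ) - (t : ℂ)))

/-- `ē_t⁻ := exp(−w(T−t))`. -/
noncomputable def eBarMinus (T ε : ℝ) (z : ℂ) (t : ℝ) : ℂ :=
  Complex.exp (-wGen ε z * ((T : ℂ) - (t : ℂ)))

/-- `S_t := w (ā⁺ē_t⁺ − ā⁻ē_t⁻)/(ā⁺ē_t⁺ + ā⁻ē_t⁻)`. -/
noncomputable def SGen (T ε c : ℝ) (z : ℂ) (t : ℝ) : ℂ :=
  wGen ε z *
    ((aBarPlus ε c z * eBarPlus T ε z t - aBarMinus ε c z * eBarMinus T ε z t) /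
      (aBarPlus ε c z * eBarPlus T ε z t + aBarMinus ε c z * eBarMinus T ε z t))

lemma denom_aux (w aP aM : ℂ) (τ : ℝ) (hτ : 0 ≤ τ) (hr : 0 < w.re)
    (hba : ‖aM‖ ≤ ‖aP‖) (hsum : aP + aM ≠ 0) :
    aP * Complex.exp (w * (τ : ℂ)) + aM * Complex.exp (-w * (τ : ℂ)) ≠ 0 := by
  intro h0
  have heq : aP * Complex.exp (w * (τ : ℂ)) = -(aM * Complex.exp (-w * (τ : ℂ))) :=
    eq_neg_of_add_eq_zero_left h0
  have habs1 : ‖Complex.exp (w * (τ:ℂ))‖ = Real.exp (w.re * τ) := by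
    rw [Complex.norm_exp]; congr 1; simp [Complex.mul_re]
  have habs2 : ‖Complex.exp (-w * (τ:ℂ))‖ = Real.exp (-(w.re * τ)) := by
    rw [Complex.norm_exp]; congr 1; simp [Complex.mul_re]
  have hA := congrArg (fun x : ℂ => ‖x‖) heq
  simp only [norm_neg, norm_mul] at hA
  rw [habs1, habs2] at hA
  rcases eq_or_ne ‖aP‖ 0 with hA0 | hA0
  · have hM : ‖aM‖ = 0 :=
      le_antisymm (hA0 ▸ hba) (norm_nonneg _)
    apply hsum
    rw [norm_eq_zero.mp hA0, norm_eq_zero.mp hM, add_zero]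
  · have hAp : 0 < ‖aP‖ := (norm_nonneg _).lt_of_ne (Ne.symm hA0)
    have h1 : ‖aP‖ * Real.exp (w.re * τ) ≤ ‖aP‖ * Real.exp (-(w.re * τ)) := by
      rw [hA]; exact mul_le_mul_of_nonneg_right hba (Real.exp_nonneg _)
    have h2 : w.re * τ ≤ -(w.re * τ) :=
      Real.exp_le_exp.mp (le_of_mul_le_mul_left h1 hAp)
    have hτ0 : τ = 0 := le_antisymm (by nlinarith) hτ
    rw [hτ0] at h0
    simp only [Complex.ofReal_zero, mul_zero, Complex.exp_zero, mul_one] at h0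
    exact hsum h0

lemma abs_sub_le_abs_add_aux (w b : ℂ) (h : 0 ≤ (w * (starRingEnd ℂ) b).re) :
    ‖w - b‖ ≤ ‖w + b‖ := by
  rw [Complex.norm_def, Complex.norm_def]
  apply Real.sqrt_le_sqrt
  rw [Complex.normSq_sub, Complex.normSq_add]
  linarith

/-- Fix `z ∈ ℂ` with `|z| < 1`. The denominator `ā⁺ē_t⁺ + ā⁻ē_t⁻` never vanishes on `[0,T]`,
`t ↦ S_t` is differentiable with `(d/dt)S_t = (S_t)² − ε(1−z)`, and `S_T = c(1−z)`. -/
theorem generating_function_explicit_solution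
    (T ε c : ℝ) (hT : 0 < T) (hε : 0 < ε) (hc : 0 ≤ c)
    (z : ℂ) (hz : ‖z‖ < 1) :
    (∀ t ∈ Set.Icc (0:ℝ) T,
      aBarPlus ε c z * eBarPlus T ε z t + aBarMinus ε c z * eBarMinus T ε z t ≠ 0) ∧
    (∀ t ∈ Set.Icc (0:ℝ) T,
      HasDerivWithinAt (fun s : ℝ => SGen T ε c z s)
        ((SGen T ε c z t) ^ 2 - (ε : ℂ) * (1 - z)) (Set.Icc (0:ℝ) T) t) ∧
    SGen T ε c z T = (c : ℂ) * (1 - z) := by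
  have hεC : (ε : ℂ) ≠ 0 := Complex.ofReal_ne_zero.mpr hε.ne'
  have hzre : z.re < 1 := lt_of_le_of_lt (Complex.re_le_norm z) hz
  have hure : 0 < ((ε : ℂ) * (1 - z)).re := by
    have h : ((ε : ℂ) * (1 - z)).re = ε * (1 - z.re) := by
      simp [Complex.mul_re, Complex.sub_re, Complex.sub_im]
    rw [h]
    have : 0 < 1 - z.re := by linarith
    positivity
  have hu0 : (ε : ℂ) * (1 - z) ≠ 0 := by
    intro h; rw [h] at hure; simp at hure
  have hw2 : wGen ε z ^ 2 = (ε : ℂ) * (1 - z) := by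
    rw [wGen, sq, ← Complex.cpow_add _ _ hu0]
    norm_num
  have hw0 : wGen ε z ≠ 0 := by
    intro h
    rw [h] at hw2
    exact hu0 (by simpa using hw2.symm)
  have hwexp : wGen ε z = Complex.exp (Complex.log ((ε : ℂ) * (1 - z)) * (1 / 2)) := by
    rw [wGen, Complex.cpow_def_of_ne_zero hu0]
  have harg : |((ε : ℂ) * (1 - z)).arg| < Real.pi / 2 :=
    Complex.abs_arg_lt_pi_div_two_iff.mpr (Or.inl hure)
  have hRew : 0 < (wGen ε z).re := by
    rw [hwexp, Complex.exp_re]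
    apply mul_pos (Real.exp_pos _)
    apply Real.cos_pos_of_mem_Ioo
    have him : (Complex.log ((ε : ℂ) * (1 - z)) * (1 / 2)).im
        = ((ε : ℂ) * (1 - z)).arg / 2 := by
      simp [Complex.mul_im, Complex.log_im]
      ring
    rw [him]
    have h' := abs_lt.mp harg
    have hπ := Real.pi_pos
    constructor
    · linarith [h'.1]
    · linarith [h'.2]
  have hb_eq : (c : ℂ) * (1 - z) = ((c / ε : ℝ) : ℂ) * wGen ε z ^ 2 := by
    rw [hw2]
    push_cast
    field_simp
  have key : 0 ≤ (wGen ε z * (starRingEnd ℂ) ((c : ℂ) * (1 - z))).re := by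
    rw [hb_eq, map_mul, Complex.conj_ofReal, map_pow]
    have h : wGen ε z * (((c / ε : ℝ) : ℂ) * ((starRingEnd ℂ) (wGen ε z)) ^ 2)
        = ((c / ε : ℝ) : ℂ) * ((Complex.normSq (wGen ε z) : ℂ) * (starRingEnd ℂ) (wGen ε z)) := by
      rw [← Complex.mul_conj]; ring
    rw [h, Complex.re_ofReal_mul, Complex.re_ofReal_mul, Complex.conj_re]
    exact mul_nonneg (div_nonneg hc hε.le)
      (mul_nonneg (Complex.normSq_nonneg _) hRew.le)
  have hba : ‖aBarMinus ε c z‖ ≤ ‖aBarPlus ε c z‖ :=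
    abs_sub_le_abs_add_aux (wGen ε z) ((c : ℂ) * (1 - z)) key
  have hsum : aBarPlus ε c z + aBarMinus ε c z ≠ 0 := by
    have h : aBarPlus ε c z + aBarMinus ε c z = 2 * wGen ε z := by
      rw [aBarPlus, aBarMinus]; ring
    rw [h]
    exact mul_ne_zero two_ne_zero hw0
  have hden : ∀ t ∈ Set.Icc (0:ℝ) T,
      aBarPlus ε c z * eBarPlus T ε z t + aBarMinus ε c z * eBarMinus T ε z t ≠ 0 := by
    intro t ht
    have hτ : 0 ≤ T - t := by linarith [ht.2]
    have h := denom_aux (wGen ε z) (aBarPlus ε c z) (aBarMinus ε c z) (T - t) hτ hRew hba hsum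
    simpa [eBarPlus, eBarMinus, Complex.ofReal_sub] using h
  refine ⟨hden, ?_, ?_⟩
  · intro t ht
    have hD := hden t ht
    simp only [SGen, eBarPlus, eBarMinus] at hD ⊢
    set w := wGen ε z with hwdef
    set aP := aBarPlus ε c z with haPdef
    set aM := aBarMinus ε c z with haMdef
    have hlin : HasDerivAt (fun u : ℂ => w * ((T : ℂ) - u)) (-w) ((t : ℝ) : ℂ) := by
      simpa using ((hasDerivAt_id ((t : ℝ) : ℂ)).const_sub (T : ℂ)).const_mul w
    have hlin2 : HasDerivAt (fun u : ℂ => -w * ((T : ℂ) - u)) w ((t : ℝ) : ℂ) := by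
      simpa using ((hasDerivAt_id ((t : ℝ) : ℂ)).const_sub (T : ℂ)).const_mul (-w)
    have hEp : HasDerivAt (fun s : ℝ => Complex.exp (w * ((T : ℂ) - (s : ℂ))))
        (Complex.exp (w * ((T : ℂ) - (t : ℂ))) * (-w)) t := (hlin.cexp).comp_ofReal
    have hEm : HasDerivAt (fun s : ℝ => Complex.exp (-w * ((T : ℂ) - (s : ℂ))))
        (Complex.exp (-w * ((T : ℂ) - (t : ℂ))) * w) t := (hlin2.cexp).comp_ofReal
    have hN := (hEp.const_mul aP).sub (hEm.const_mul aM)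
    have hDd := (hEp.const_mul aP).add (hEm.const_mul aM)
    have hQ := (hN.div hDd hD).const_mul w
    convert hQ.hasDerivWithinAt using 1
    case e'_4 => rfl
    case e'_8 => rfl
    simp only [Pi.add_apply, Pi.sub_apply]
    rw [← hw2]
    set E := Complex.exp (w * ((T : ℂ) - (t : ℂ))) with hE
    set F := Complex.exp (-w * ((T : ℂ) - (t : ℂ))) with hF
    field_simp
    ring
  · simp only [SGen, eBarPlus, eBarMinus, sub_self, mul_zero, Complex.exp_zero, mul_one,
      aBarPlus, aBarMinus]
    have h2w : (wGen ε z + (c:ℂ)*(1-z)) + (wGen ε z - (c:ℂ)*(1-z)) ≠ 0 := by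
      have h : (wGen ε z + (c:ℂ)*(1-z)) + (wGen ε z - (c:ℂ)*(1-z)) = 2 * wGen ε z := by ring
      rw [h]; exact mul_ne_zero two_ne_zero hw0
    rw [mul_comm, div_mul_eq_mul_div, div_eq_iff h2w]
    ring
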